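/- For a composition α of n with m parts, the map sending a Y-word w of content α to the standard immaculate tableau T(w) placing j in row w_j (in increasing order along each row) is a bijection between Y-words of content α and standard immaculate tableaux of shape α. -/

import Mathlib

/-- An immaculate tableau of shape `α` and content `β`, encoded as a list of rows. -/
def IsImmaculate (T : List (List ℕ)) (α β : List ℕ) : Prop :=
  T.map List.length = α ∧
  (∀ r ∈ T, List.Chain' (· ≤ ·) r) ∧
  List.Chain' (· < ·) (T.map List.headI) ∧
  (∀ x ∈ T.flatten, 0 < x) ∧
  (∀ i : ℕ, T.flatten.count (i + 1) = β.getD i 0)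

/-- A word (on positive letters) is a `𝒴`-word if the first occurrence of `c+1`
precedes the first occurrence of `c+2`, for every `c`. -/
def IsYWord (w : List ℕ) : Prop :=
  (∀ x ∈ w, 0 < x) ∧
  ∀ c : ℕ, (c + 2) ∈ w → (c + 1) ∈ w ∧ w.idxOf (c + 1) < w.idxOf (c + 2)

/-- A word has content `α` if letter `j` occurs `α_j` times (and all letters are positive). -/
def HasContent (α : List ℕ) (w : List ℕ) : Prop :=
  (∀ x ∈ w, 0 < x) ∧ ∀ i : ℕ, w.count (i + 1) = α.getD i 0

namespace YT

def row (w : List ℕ) (r : ℕ) : List ℕ :=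
  ((List.range w.length).filter (fun j => w.getD j 0 == r + 1)).map (· + 1)

def toTab (α w : List ℕ) : List (List ℕ) := (List.range α.length).map (row w)

def fromTab (n : ℕ) (T : List (List ℕ)) : List ℕ :=
  (List.range n).map (fun j => T.findIdx (fun l => decide ((j + 1) ∈ l)) + 1)

lemma map_getD_range (w : List ℕ) : (List.range w.length).map (fun j => w.getD j 0) = w := by
  induction w with
  | nil => simp
  | cons a t ih =>
    rw [List.length_cons, List.range_succ_eq_map, List.map_cons, List.map_map]
    simp only [List.getD_cons_zero]
    congr 1

lemma mem_row {w : List ℕ} {r x : ℕ} :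
    x ∈ row w r ↔ ∃ j < w.length, w.getD j 0 = r + 1 ∧ x = j + 1 := by
  simp only [row, List.mem_map, List.mem_filter, List.mem_range, beq_iff_eq]
  constructor
  · rintro ⟨j, ⟨hj, hw⟩, rfl⟩; exact ⟨j, hj, hw, rfl⟩
  · rintro ⟨j, hj, hw, rfl⟩; exact ⟨j, ⟨hj, hw⟩, rfl⟩

lemma length_row (w : List ℕ) (r : ℕ) : (row w r).length = w.count (r + 1) := by
  rw [row, List.length_map, ← List.countP_eq_length_filter]
  conv_rhs => rw [List.count, ← map_getD_range w, List.countP_map]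
  rfl

lemma pairwise_lt_row (w : List ℕ) (r : ℕ) : (row w r).Pairwise (· < ·) := by
  rw [row, List.pairwise_map]
  exact (List.pairwise_lt_range.sublist List.filter_sublist).imp
    (fun h => by omega)

lemma nodup_row (w : List ℕ) (r : ℕ) : (row w r).Nodup :=
  (pairwise_lt_row w r).imp ne_of_lt

lemma sorted_eq (n : ℕ) (l : List ℕ) (hl : l.Pairwise (· < ·))
    (hmem : ∀ x ∈ l, 0 < x ∧ x ≤ n) :
    ((List.range n).filter (fun j => decide ((j + 1) ∈ l))).map (· + 1) = l := by
  refine (fun hp h1 h2 => List.Perm.eq_of_pairwise' (r := (· ≤ ·)) h1 h2 hp) ?_ ?_ ?_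
  · rw [List.perm_ext_iff_of_nodup]
    · intro a
      simp only [List.mem_map, List.mem_filter, List.mem_range, decide_eq_true_eq]
      constructor
      · rintro ⟨j, ⟨hj, hm⟩, rfl⟩; exact hm
      · intro ha
        obtain ⟨h1, h2⟩ := hmem a ha
        exact ⟨a - 1, ⟨by omega, by rwa [Nat.sub_add_cancel h1]⟩, by omega⟩
    · refine (List.pairwise_map.2 ?_).imp ne_of_lt
      exact (List.pairwise_lt_range.sublist List.filter_sublist).imp (fun h => by omega)
    · exact (hl.imp ne_of_lt)
  · refine (List.pairwise_map.2 ?_).imp le_of_lt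
    exact (List.pairwise_lt_range.sublist List.filter_sublist).imp (fun h => by omega)
  · exact hl.imp le_of_lt

lemma headI_min {l : List ℕ} (hl : l.Pairwise (· ≤ ·)) {x : ℕ} (hx : x ∈ l) :
    l.headI ≤ x := by
  cases l with
  | nil => simp at hx
  | cons a t =>
    rcases List.mem_cons.1 hx with rfl | h
    · simp
    · exact List.rel_of_pairwise_cons hl h

lemma headI_mem {l : List ℕ} (h : l ≠ []) : l.headI ∈ l := by
  cases l with
  | nil => simp at h
  | cons a t => simp

section Forward

variable {n : ℕ} {α w : List ℕ}

lemma letter_lt (hc : HasContent α w) {x : ℕ} (hx : x ∈ w) : x - 1 < α.length := by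
  have hx0 : 0 < x := hc.1 x hx
  have hcount : 0 < w.count x := List.count_pos_iff.2 hx
  by_contra hge
  have : w.count ((x - 1) + 1) = α.getD (x - 1) 0 := hc.2 (x - 1)
  rw [List.getD_eq_default _ _ (by omega), Nat.sub_add_cancel hx0] at this
  omega

lemma row_ne_nil (hα : ∀ a ∈ α, 0 < a) (hc : HasContent α w) {r : ℕ} (hr : r < α.length) :
    row w r ≠ [] := by
  have : (row w r).length = α.getD r 0 := by rw [length_row, hc.2]
  rw [List.getD_eq_getElem _ _ hr] at this
  have h2 := hα _ (List.getElem_mem hr)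
  intro h
  rw [h] at this
  simp only [List.length_nil] at this
  omega

lemma headI_row (hα : ∀ a ∈ α, 0 < a) (hc : HasContent α w) {r : ℕ} (hr : r < α.length) :
    (row w r).headI = w.idxOf (r + 1) + 1 := by
  obtain ⟨j, hj, hwj, hh⟩ := mem_row.1 (headI_mem (row_ne_nil hα hc hr))
  have hidx : w.idxOf (r + 1) = j := by
    rw [List.idxOf, List.findIdx_eq hj]
    constructor
    · rw [List.getD_eq_getElem w 0 hj] at hwj
      simp [hwj]
    · intro k hk
      simp only [beq_eq_false_iff_ne, ne_eq]
      intro hke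
      have : (k + 1) ∈ row w r := mem_row.2 ⟨k, by omega, by rw [List.getD_eq_getElem w 0 (by omega)]; exact hke, rfl⟩
      have := headI_min ((pairwise_lt_row w r).imp le_of_lt) this
      omega
  omega

lemma toTab_immaculate (hα : ∀ a ∈ α, 0 < a) (hlen : w.length = n)
    (hc : HasContent α w) (hy : IsYWord w) :
    IsImmaculate (toTab α w) α (List.replicate n 1) := by
  have hflat : ∀ x, x ∈ (toTab α w).flatten ↔ ∃ r < α.length, x ∈ row w r := by
    intro x
    simp only [toTab, List.mem_flatten, List.mem_map, List.mem_range]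
    constructor
    · rintro ⟨l, ⟨r, hr, rfl⟩, hx⟩; exact ⟨r, hr, hx⟩
    · rintro ⟨r, hr, hx⟩; exact ⟨row w r, ⟨r, hr, rfl⟩, hx⟩
  have hnodup : (toTab α w).flatten.Nodup := by
    rw [List.nodup_flatten]
    constructor
    · rintro l hl
      simp only [toTab, List.mem_map, List.mem_range] at hl
      obtain ⟨r, hr, rfl⟩ := hl
      exact nodup_row w r
    · rw [toTab, List.pairwise_map]
      refine List.pairwise_lt_range.imp ?_
      intro a b hab
      intro x hxa hxb
      obtain ⟨j, hj, hwj, rfl⟩ := mem_row.1 hxa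
      obtain ⟨k, hk, hwk, he⟩ := mem_row.1 hxb
      have : j = k := by omega
      subst this
      omega
  refine ⟨?_, ?_, ?_, ?_, ?_⟩
  · rw [toTab, List.map_map]
    have : (List.length ∘ row w) = fun r => α.getD r 0 := by
      funext r
      simp [length_row, hc.2 r]
    rw [this, map_getD_range]
  · intro l hl
    simp only [toTab, List.mem_map, List.mem_range] at hl
    obtain ⟨r, hr, rfl⟩ := hl
    exact List.isChain_iff_pairwise.2 ((pairwise_lt_row w r).imp le_of_lt)
  · rw [toTab, List.map_map, List.Chain', List.isChain_map, List.isChain_iff_getElem]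
    intro i hi
    simp only [List.length_range] at hi
    simp only [List.get_eq_getElem, List.getElem_range, Function.comp_apply]
    rw [headI_row hα hc (by omega), headI_row hα hc (by omega)]
    have hmem : (i + 2) ∈ w := by
      rw [← List.count_pos_iff, hc.2 (i + 1), List.getD_eq_getElem _ _ (by omega)]
      exact hα _ (List.getElem_mem (by omega))
    have h2 := (hy.2 i hmem).2
    have e : i + 1 + 1 = i + 2 := by omega
    rw [e]
    omega
  · intro x hx
    obtain ⟨r, hr, hxr⟩ := (hflat x).1 hx
    obtain ⟨j, _, _, rfl⟩ := mem_row.1 hxr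
    omega
  · intro i
    have hmemiff : (i + 1) ∈ (toTab α w).flatten ↔ i < n := by
      rw [hflat]
      constructor
      · rintro ⟨r, hr, hm⟩
        obtain ⟨j, hj, _, he⟩ := mem_row.1 hm
        omega
      · intro hi
        have hiw : w.getD i 0 ∈ w := by
          rw [List.getD_eq_getElem _ _ (by omega)]
          exact List.getElem_mem (by omega)
        have h0 : 0 < w.getD i 0 := hc.1 _ hiw
        refine ⟨w.getD i 0 - 1, letter_lt hc hiw, mem_row.2 ⟨i, by omega, by omega, rfl⟩⟩
    by_cases hi : i < n
    · rw [List.count_eq_one_of_mem hnodup (hmemiff.2 hi),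
        List.getD_eq_getElem _ _ (by simpa using hi)]
      simp
    · rw [List.count_eq_zero_of_not_mem (fun h => hi (hmemiff.1 h)),
        List.getD_eq_default _ _ (by simpa using Nat.le_of_not_lt hi)]

end Forward

section Backward

variable {n : ℕ} {α : List ℕ} {T : List (List ℕ)}

lemma getD_replicate_one (n i : ℕ) :
    (List.replicate n (1:ℕ)).getD i 0 = if i < n then 1 else 0 := by
  by_cases h : i < n
  · rw [List.getD_eq_getElem _ _ (by simpa using h)]
    simp [h]
  · rw [List.getD_eq_default _ _ (by simpa using Nat.le_of_not_lt h)]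
    simp [h]

variable (hT : IsImmaculate T α (List.replicate n 1))
include hT

lemma Tlen : T.length = α.length := by
  conv_rhs => rw [← hT.1]
  simp

lemma mem_flatten_bounds {x : ℕ} (hx : x ∈ T.flatten) : 0 < x ∧ x ≤ n := by
  have h0 : 0 < x := hT.2.2.2.1 x hx
  have hc : T.flatten.count ((x-1)+1) = (List.replicate n (1:ℕ)).getD (x-1) 0 := hT.2.2.2.2 (x-1)
  rw [Nat.sub_add_cancel h0, getD_replicate_one] at hc
  have := List.count_pos_iff.2 hx
  by_contra hn
  rw [if_neg (by omega)] at hc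
  omega

lemma mem_flatten_iff {j : ℕ} (hj : j < n) : (j + 1) ∈ T.flatten := by
  have hc := hT.2.2.2.2 j
  rw [getD_replicate_one, if_pos hj] at hc
  rw [← List.count_pos_iff]
  omega

lemma nodup_flat : T.flatten.Nodup := by
  rw [List.nodup_iff_count_le_one]
  intro a
  match a with
  | 0 =>
    rw [List.count_eq_zero_of_not_mem]
    · omega
    · intro h; exact absurd (hT.2.2.2.1 0 h) (by omega)
  | (i+1) =>
    rw [hT.2.2.2.2 i, getD_replicate_one]
    split <;> omega

lemma pairwise_lt_rows {r : ℕ} (hr : r < T.length) : T[r].Pairwise (· < ·) := by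
  have h1 : T[r].Pairwise (· ≤ ·) :=
    List.isChain_iff_pairwise.1 (hT.2.1 _ (List.getElem_mem hr))
  have h2 : T[r].Nodup :=
    ((List.nodup_flatten.1 (nodup_flat hT)).1 _ (List.getElem_mem hr))
  exact (h1.and h2).imp (fun ⟨hle, hne⟩ => lt_of_le_of_ne hle hne)

lemma ridx_lt {j : ℕ} (hj : j < n) :
    T.findIdx (fun l => decide ((j + 1) ∈ l)) < T.length := by
  apply List.findIdx_lt_length_of_exists
  obtain ⟨l, hl, hm⟩ := List.mem_flatten.1 (mem_flatten_iff hT hj)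
  exact ⟨l, hl, by simpa using hm⟩

lemma mem_iff_ridx {j r : ℕ} (hr : r < T.length) :
    (j + 1) ∈ T[r] ↔ T.findIdx (fun l => decide ((j + 1) ∈ l)) = r := by
  constructor
  · intro hm
    have hfl : (j+1) ∈ T.flatten := List.mem_flatten.2 ⟨T[r], List.getElem_mem hr, hm⟩
    have hlt : T.findIdx (fun l => decide ((j + 1) ∈ l)) < T.length := by
      apply List.findIdx_lt_length_of_exists
      obtain ⟨l, hl, hmm⟩ := List.mem_flatten.1 hfl
      exact ⟨l, hl, by simpa using hmm⟩
    have hp : (j+1) ∈ T[T.findIdx (fun l => decide ((j + 1) ∈ l))] := by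
      have := @List.findIdx_getElem _ (fun l => decide ((j + 1) ∈ l)) T hlt
      simpa using this
    by_contra hne
    have hdisj := List.pairwise_iff_getElem.1 (List.nodup_flatten.1 (nodup_flat hT)).2
    rcases Nat.lt_or_ge (T.findIdx (fun l => decide ((j + 1) ∈ l))) r with h | h
    · exact hdisj _ _ hlt hr h hp hm
    · have : r < T.findIdx (fun l => decide ((j + 1) ∈ l)) := by omega
      exact hdisj _ _ hr hlt this hm hp
  · rintro rfl
    have := @List.findIdx_getElem _ (fun l => decide ((j + 1) ∈ l)) T hr
    simpa using this

omit hT in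
lemma fromTab_getD {j : ℕ} (hj : j < n) (d : ℕ) :
    (fromTab n T).getD j d = T.findIdx (fun l => decide ((j + 1) ∈ l)) + 1 := by
  rw [fromTab, List.getD_eq_getElem _ _ (by simpa using hj), List.getElem_map]
  simp

lemma row_eq_T (hα : ∀ a ∈ α, 0 < a) {r : ℕ} (hr : r < T.length) :
    ((List.range n).filter (fun j => decide ((j + 1) ∈ T[r]))).map (· + 1) = T[r] :=
  sorted_eq n _ (pairwise_lt_rows hT hr)
    (fun x hx => mem_flatten_bounds hT (List.mem_flatten.2 ⟨T[r], List.getElem_mem hr, hx⟩))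

lemma row_len (hα : ∀ a ∈ α, 0 < a) {r : ℕ} (hr : r < T.length) :
    T[r].length = α.getD r 0 := by
  have h := hT.1
  have : (T.map List.length)[r]'(by simpa using hr) = α[r]'(by rwa [← Tlen hT]) := by
    simp [h]
  rw [List.getElem_map] at this
  rw [this, List.getD_eq_getElem _ _ (by rwa [← Tlen hT])]

lemma row_ne_nil' (hα : ∀ a ∈ α, 0 < a) {r : ℕ} (hr : r < T.length) : T[r] ≠ [] := by
  have h1 := row_len hT hα hr
  have hr' : r < α.length := by rwa [← Tlen hT]
  rw [List.getD_eq_getElem _ _ hr'] at h1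
  have := hα _ (List.getElem_mem hr')
  intro h
  rw [h] at h1
  simp at h1
  omega

lemma headI_bounds (hα : ∀ a ∈ α, 0 < a) {r : ℕ} (hr : r < T.length) :
    0 < T[r].headI ∧ T[r].headI ≤ n :=
  mem_flatten_bounds hT (List.mem_flatten.2 ⟨T[r], List.getElem_mem hr,
    headI_mem (row_ne_nil' hT hα hr)⟩)

lemma indexOf_fromTab (hα : ∀ a ∈ α, 0 < a) {r : ℕ} (hr : r < T.length) :
    (fromTab n T).idxOf (r + 1) = T[r].headI - 1 := by
  obtain ⟨hpos, hle⟩ := headI_bounds hT hα hr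
  have hmemh : T[r].headI ∈ T[r] := headI_mem (row_ne_nil' hT hα hr)
  have hlen : (fromTab n T).length = n := by simp [fromTab]
  rw [List.idxOf, List.findIdx_eq (by omega)]
  constructor
  · have : (fromTab n T)[T[r].headI - 1]'(by omega) =
        T.findIdx (fun l => decide ((T[r].headI - 1 + 1) ∈ l)) + 1 := by
      simp [fromTab]
    rw [this]
    have : T.findIdx (fun l => decide ((T[r].headI - 1 + 1) ∈ l)) = r := by
      rw [← mem_iff_ridx hT hr, Nat.sub_add_cancel hpos]
      exact hmemh
    simp [this]
  · intro k hk
    have hkn : k < n := by omega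
    have hgetk : (fromTab n T)[k]'(by omega) =
        T.findIdx (fun l => decide ((k + 1) ∈ l)) + 1 := by
      simp [fromTab]
    rw [hgetk]
    simp only [beq_eq_false_iff_ne, ne_eq, Nat.add_right_cancel_iff]
    intro he
    have hmk : (k+1) ∈ T[r] := (mem_iff_ridx hT hr).2 he
    have := headI_min ((pairwise_lt_rows hT hr).imp le_of_lt) hmk
    omega

lemma fromTab_content (hα : ∀ a ∈ α, 0 < a) : HasContent α (fromTab n T) := by
  constructor
  · intro x hx
    simp only [fromTab, List.mem_map, List.mem_range] at hx
    obtain ⟨j, hj, rfl⟩ := hx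
    omega
  · intro i
    rw [fromTab, List.count, List.countP_map]
    by_cases hi : i < T.length
    · have : List.countP ((fun x => x == i + 1) ∘ fun j => T.findIdx (fun l => decide ((j + 1) ∈ l)) + 1) (List.range n)
          = List.countP (fun j => decide ((j + 1) ∈ T[i])) (List.range n) := by
        apply List.countP_congr
        intro j hj
        simp only [Function.comp_apply, beq_iff_eq, Nat.add_right_cancel_iff, decide_eq_true_eq]
        exact (mem_iff_ridx hT hi).symm
      rw [this, List.countP_eq_length_filter]
      have := congrArg List.length (row_eq_T hT hα hi)
      rw [List.length_map] at this
      rw [this, row_len hT hα hi]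
    · have hzero : List.countP ((fun x => x == i + 1) ∘ fun j => T.findIdx (fun l => decide ((j + 1) ∈ l)) + 1) (List.range n) = 0 := by
        rw [List.countP_eq_zero]
        intro j hj
        simp only [List.mem_range] at hj
        simp only [Function.comp_apply, beq_iff_eq, Nat.add_right_cancel_iff]
        intro he
        exact hi (he ▸ ridx_lt hT hj)
      rw [hzero, List.getD_eq_default]
      rw [← Tlen hT]
      omega

lemma fromTab_yword (hα : ∀ a ∈ α, 0 < a) : IsYWord (fromTab n T) := by
  constructor
  · intro x hx
    simp only [fromTab, List.mem_map, List.mem_range] at hx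
    obtain ⟨j, hj, rfl⟩ := hx
    omega
  · intro c hc2
    simp only [fromTab, List.mem_map, List.mem_range] at hc2
    obtain ⟨j, hj, hje⟩ := hc2
    have hc1T : c + 1 < T.length := by
      have := ridx_lt hT hj
      omega
    have hcT : c < T.length := by omega
    have hmem1 : (c + 1) ∈ fromTab n T := by
      obtain ⟨hpos, hle⟩ := headI_bounds hT hα hcT
      have hmemh : T[c].headI ∈ T[c] := headI_mem (row_ne_nil' hT hα hcT)
      simp only [fromTab, List.mem_map, List.mem_range]
      refine ⟨T[c].headI - 1, by omega, ?_⟩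
      have : T.findIdx (fun l => decide ((T[c].headI - 1 + 1) ∈ l)) = c := by
        rw [← mem_iff_ridx hT hcT, Nat.sub_add_cancel hpos]
        exact hmemh
      rw [this]
    refine ⟨hmem1, ?_⟩
    rw [indexOf_fromTab hT hα hcT]
    have e : c + 2 = (c + 1) + 1 := by omega
    rw [e, indexOf_fromTab hT hα hc1T]
    have hheads := List.isChain_iff_pairwise.1 hT.2.2.1
    have := List.pairwise_iff_getElem.1 hheads c (c+1) (by simpa using hcT) (by simpa using hc1T) (by omega)
    rw [List.getElem_map, List.getElem_map] at this
    have h0 := (headI_bounds hT hα hcT).1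
    omega

end Backward

section Inverses

variable {n : ℕ} {α w : List ℕ} {T : List (List ℕ)}

lemma left_inv (hlen : w.length = n) (hc : HasContent α w) :
    fromTab n (toTab α w) = w := by
  apply List.ext_getElem (by simp [fromTab, hlen])
  intro j h1 h2
  have hj : j < n := by simpa [fromTab] using h1
  have hwj : w[j] ∈ w := List.getElem_mem _
  have h0 : 0 < w[j] := hc.1 _ hwj
  have hrl : w[j] - 1 < α.length := letter_lt hc hwj
  have hfi : (toTab α w).findIdx (fun l => decide ((j+1) ∈ l)) = w[j] - 1 := by
    rw [List.findIdx_eq (by simpa [toTab] using hrl)]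
    constructor
    · have hrow : (toTab α w)[w[j]-1]'(by simpa [toTab] using hrl) = row w (w[j]-1) := by
        simp [toTab]
      rw [hrow]
      simp only [decide_eq_true_eq]
      exact mem_row.2 ⟨j, by omega,
        by rw [List.getD_eq_getElem _ _ (by omega)]; omega, rfl⟩
    · intro k hk
      have hrow : (toTab α w)[k]'(by simp [toTab]; omega) = row w k := by simp [toTab]
      rw [hrow]
      simp only [decide_eq_false_iff_not]
      intro hm
      obtain ⟨j2, hj2, hwj2, he⟩ := mem_row.1 hm
      have : j2 = j := by omega
      subst this
      rw [List.getD_eq_getElem _ _ (by omega)] at hwj2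
      omega
  have : (fromTab n (toTab α w))[j]'h1 =
      (toTab α w).findIdx (fun l => decide ((j+1) ∈ l)) + 1 := by
    simp [fromTab]
  rw [this, hfi]
  omega

lemma right_inv (hT : IsImmaculate T α (List.replicate n 1)) (hα : ∀ a ∈ α, 0 < a) :
    toTab α (fromTab n T) = T := by
  have hTlen := Tlen hT
  have hwlen : (fromTab n T).length = n := by simp [fromTab]
  apply List.ext_getElem (by simp [toTab]; omega)
  intro r h1 h2
  have hr : r < α.length := by simpa [toTab] using h1
  have hrT : r < T.length := by omega
  have hrow : (toTab α (fromTab n T))[r]'h1 = row (fromTab n T) r := by simp [toTab]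
  rw [hrow, ← row_eq_T hT hα hrT]
  rw [row, hwlen]
  congr 1
  apply List.filter_congr
  intro j hj
  have hjn : j < n := List.mem_range.1 hj
  rw [fromTab_getD hjn 0, Bool.eq_iff_iff]
  simp only [beq_iff_eq, decide_eq_true_eq, Nat.add_right_cancel_iff]
  exact (mem_iff_ridx hT hrT).symm

end Inverses

end YT

theorem yword_tableau_bijection (n : ℕ) (α : List ℕ)
    (hα : ∀ a ∈ α, 0 < a) (hsum : α.sum = n) :
    ∃ e : {w : List ℕ // w.length = n ∧ HasContent α w ∧ IsYWord w} ≃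
          {T : List (List ℕ) // IsImmaculate T α (List.replicate n 1)},
      ∀ w, ∀ j < n, (j + 1) ∈ (e w).val.getD ((w.val.getD j 1) - 1) [] := by
  refine ⟨{ toFun := fun w => ⟨YT.toTab α w.1,
              YT.toTab_immaculate hα w.2.1 w.2.2.1 w.2.2.2⟩
            invFun := fun T => ⟨YT.fromTab n T.1, by simp [YT.fromTab],
              YT.fromTab_content T.2 hα, YT.fromTab_yword T.2 hα⟩
            left_inv := fun w => Subtype.ext (YT.left_inv w.2.1 w.2.2.1)
            right_inv := fun T => Subtype.ext (YT.right_inv T.2 hα) }, ?_⟩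
  intro w j hj
  obtain ⟨hlen, hc, hy⟩ := w.2
  simp only [Equiv.coe_fn_mk]
  have hjw : j < w.1.length := by omega
  have hwj : w.1.getD j 1 = w.1[j] := List.getD_eq_getElem _ _ hjw
  have hmemw : w.1[j] ∈ w.1 := List.getElem_mem _
  have h0 : 0 < w.1[j] := hc.1 _ hmemw
  have hrl : w.1[j] - 1 < α.length := YT.letter_lt hc hmemw
  have hget : (YT.toTab α w.1).getD (w.1[j] - 1) [] = YT.row w.1 (w.1[j] - 1) := by
    rw [List.getD_eq_getElem _ _ (by simpa [YT.toTab] using hrl)]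
    simp [YT.toTab]
  rw [hwj, hget]
  exact YT.mem_row.2 ⟨j, hjw, by rw [List.getD_eq_getElem _ _ hjw]; omega, rfl⟩
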